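/- Let Ψ be an ℝⁿ-valued random vector whose components are independent standard normal random variables, let a ∈ ℝⁿ with a ≠ 0, b ∈ ℝ, β > 0, and define g(ψ) = ⟨a, ψ⟩ + b. Then the reliability index constraint of the reliability index approach, P[g(Ψ) < 0] ≤ Φ(−β), holds if and only if the performance measure approach constraint holds, namely min{ g(ψ) : ‖ψ‖ = β } ≥ 0. -/

import Mathlib

open MeasureTheory ProbabilityTheory Real Set RealInnerProductSpace

open NNReal

lemma pdf_conv_pointwise {p q : ℝ≥0} (hp : p ≠ 0) (hq : q ≠ 0) (z x : ℝ) :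
    gaussianPDFReal 0 p x * gaussianPDFReal 0 q (z - x)
      = gaussianPDFReal 0 (p + q) z *
        ((Real.sqrt (π / (((p : ℝ) + q) / (2 * p * q))))⁻¹ *
          Real.exp (-(((p : ℝ) + q) / (2 * (p : ℝ) * q)) * (x - (p : ℝ) * z / ((p : ℝ) + q))^2)) := by
  have hP : (0:ℝ) < p := lt_of_le_of_ne (p.coe_nonneg) (by exact_mod_cast (Ne.symm hp))
  have hQ : (0:ℝ) < q := lt_of_le_of_ne (q.coe_nonneg) (by exact_mod_cast (Ne.symm hq))
  have hPQ : (0:ℝ) < (p:ℝ) + q := by linarith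
  simp only [gaussianPDFReal, sub_zero, NNReal.coe_add]
  have hπ := Real.pi_pos
  rw [show ((√(2 * π * (p:ℝ)))⁻¹ * rexp (-x ^ 2 / (2 * (p:ℝ)))) *
      ((√(2 * π * (q:ℝ)))⁻¹ * rexp (-(z - x) ^ 2 / (2 * (q:ℝ))))
      = ((√(2 * π * (p:ℝ)))⁻¹ * (√(2 * π * (q:ℝ)))⁻¹) *
        (rexp (-x ^ 2 / (2 * (p:ℝ))) * rexp (-(z - x) ^ 2 / (2 * (q:ℝ)))) by ring,
    ← Real.exp_add]
  rw [show (√(2 * π * ((p:ℝ) + q)))⁻¹ * rexp (-z ^ 2 / (2 * ((p:ℝ) + q))) *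
      ((√(π / (((p : ℝ) + q) / (2 * p * q))))⁻¹ *
        rexp (-(((p : ℝ) + q) / (2 * (p : ℝ) * q)) * (x - (p : ℝ) * z / ((p : ℝ) + q))^2))
      = ((√(2 * π * ((p:ℝ) + q)))⁻¹ * (√(π / (((p : ℝ) + q) / (2 * p * q))))⁻¹) *
        (rexp (-z ^ 2 / (2 * ((p:ℝ) + q))) *
          rexp (-(((p : ℝ) + q) / (2 * (p : ℝ) * q)) * (x - (p : ℝ) * z / ((p : ℝ) + q))^2)) by ring,
    ← Real.exp_add]
  congr 1
  · rw [← mul_inv, ← mul_inv, ← Real.sqrt_mul (by positivity), ← Real.sqrt_mul (by positivity)]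
    congr 1
    field_simp
  · congr 1
    field_simp
    ring

lemma pdf_conv_integral {p q : ℝ≥0} (hp : p ≠ 0) (hq : q ≠ 0) (z : ℝ) :
    ∫ x : ℝ, gaussianPDFReal 0 p x * gaussianPDFReal 0 q (z - x)
      = gaussianPDFReal 0 (p + q) z := by
  have hP : (0:ℝ) < p := lt_of_le_of_ne (p.coe_nonneg) (by exact_mod_cast (Ne.symm hp))
  have hQ : (0:ℝ) < q := lt_of_le_of_ne (q.coe_nonneg) (by exact_mod_cast (Ne.symm hq))
  have hA : (0:ℝ) < ((p : ℝ) + q) / (2 * p * q) := by positivity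
  simp_rw [pdf_conv_pointwise hp hq z]
  rw [integral_const_mul, integral_const_mul]
  have : ∫ x : ℝ, rexp (-(((p : ℝ) + q) / (2 * (p : ℝ) * q)) * (x - (p : ℝ) * z / ((p : ℝ) + q))^2)
      = √(π / (((p : ℝ) + q) / (2 * (p : ℝ) * q))) := by
    rw [integral_sub_right_eq_self (μ := volume)
      (fun x : ℝ => rexp (-(((p : ℝ) + q) / (2 * (p : ℝ) * q)) * x^2)) ((p : ℝ) * z / ((p : ℝ) + q))]
    exact integral_gaussian _
  rw [this, inv_mul_cancel₀ (by positivity), mul_one]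

lemma pdf_conv_integrable {p q : ℝ≥0} (hp : p ≠ 0) (hq : q ≠ 0) (z : ℝ) :
    Integrable (fun x : ℝ => gaussianPDFReal 0 p x * gaussianPDFReal 0 q (z - x)) := by
  have hP : (0:ℝ) < p := lt_of_le_of_ne (p.coe_nonneg) (by exact_mod_cast (Ne.symm hp))
  have hQ : (0:ℝ) < q := lt_of_le_of_ne (q.coe_nonneg) (by exact_mod_cast (Ne.symm hq))
  have hA : (0:ℝ) < ((p : ℝ) + q) / (2 * p * q) := by positivity
  simp_rw [pdf_conv_pointwise hp hq z]
  refine Integrable.const_mul ?_ _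
  refine Integrable.const_mul ?_ _
  have : Integrable (fun x : ℝ => rexp (-(((p : ℝ) + q) / (2 * (p : ℝ) * q)) * x^2)) :=
    integrable_exp_neg_mul_sq hA
  exact this.comp_sub_right _

lemma gauss_conv_measure {p q : ℝ≥0} (hp : p ≠ 0) (hq : q ≠ 0) :
    ((gaussianReal 0 p).prod (gaussianReal 0 q)).map (fun r : ℝ × ℝ => r.1 + r.2)
      = gaussianReal 0 (p + q) := by
  ext s hs
  rw [Measure.map_apply measurable_add hs, Measure.prod_apply (measurable_add hs)]
  have h1 : ∀ x : ℝ, (gaussianReal 0 q) (Prod.mk x ⁻¹' ((fun r : ℝ × ℝ => r.1 + r.2) ⁻¹' s))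
      = ∫⁻ z in s, gaussianPDF 0 q (z - x) := by
    intro x
    have hpre : (Prod.mk x ⁻¹' ((fun r : ℝ × ℝ => r.1 + r.2) ⁻¹' s)) = (fun y => x + y) ⁻¹' s := rfl
    rw [hpre, ← Measure.map_apply (measurable_const_add x) hs, gaussianReal_map_const_add,
      zero_add, gaussianReal_apply _ hq]
    congr 1
    ext z
    rw [gaussianPDF, gaussianPDF, gaussianPDFReal_sub, zero_add]
  simp_rw [h1]
  have hker : Measurable (fun x : ℝ => ∫⁻ z in s, gaussianPDF 0 q (z - x)) := by
    have : Measurable (Function.uncurry fun x z : ℝ => gaussianPDF 0 q (z - x)) :=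
      (measurable_gaussianPDF 0 q).comp (measurable_snd.sub measurable_fst)
    exact this.lintegral_prod_right'
  rw [gaussianReal_of_var_ne_zero _ hp,
    lintegral_withDensity_eq_lintegral_mul _ (measurable_gaussianPDF 0 p) hker]
  simp only [Pi.mul_apply]
  have hswap : ∫⁻ x : ℝ, gaussianPDF 0 p x * ∫⁻ z in s, gaussianPDF 0 q (z - x)
      = ∫⁻ z in s, ∫⁻ x : ℝ, gaussianPDF 0 p x * gaussianPDF 0 q (z - x) := by
    have hcm : ∀ x : ℝ, gaussianPDF 0 p x * ∫⁻ z in s, gaussianPDF 0 q (z - x)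
        = ∫⁻ z in s, gaussianPDF 0 p x * gaussianPDF 0 q (z - x) := fun x =>
      (lintegral_const_mul _ ((measurable_gaussianPDF 0 q).comp (measurable_id.sub_const x))).symm
    rw [lintegral_congr hcm, lintegral_lintegral_swap]
    exact ((measurable_gaussianPDF 0 p).comp measurable_fst |>.mul
      ((measurable_gaussianPDF 0 q).comp (measurable_snd.sub measurable_fst))).aemeasurable
  rw [hswap]
  have hinner : ∀ z : ℝ, ∫⁻ x : ℝ, gaussianPDF 0 p x * gaussianPDF 0 q (z - x)
      = gaussianPDF 0 (p + q) z := by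
    intro z
    have : ∀ x : ℝ, gaussianPDF 0 p x * gaussianPDF 0 q (z - x)
        = ENNReal.ofReal (gaussianPDFReal 0 p x * gaussianPDFReal 0 q (z - x)) := by
      intro x
      rw [gaussianPDF, gaussianPDF, ← ENNReal.ofReal_mul (gaussianPDFReal_nonneg _ _ _)]
    simp_rw [this]
    rw [← ofReal_integral_eq_lintegral_ofReal (pdf_conv_integrable hp hq z)
      (ae_of_all _ fun x => mul_nonneg (gaussianPDFReal_nonneg _ _ _) (gaussianPDFReal_nonneg _ _ _)),
      pdf_conv_integral hp hq z, gaussianPDF]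
  simp_rw [hinner]
  rw [gaussianReal_apply _ (by simp [hp]) s]

lemma map_eq_dirac_ae {Ω : Type*} [MeasurableSpace Ω] {P : Measure Ω} [IsProbabilityMeasure P]
    {Y : Ω → ℝ} (hY : Measurable Y) (h : P.map Y = Measure.dirac 0) :
    ∀ᵐ ω ∂P, Y ω = 0 := by
  have : P.map Y ({0}ᶜ) = 0 := by rw [h]; simp
  rw [Measure.map_apply hY (measurableSet_singleton 0).compl] at this
  filter_upwards [measure_eq_zero_iff_ae_notMem.mp this] with ω hω
  simpa using hω

lemma gauss_rv_add {Ω : Type*} [MeasurableSpace Ω] {P : Measure Ω} [IsProbabilityMeasure P]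
    {X Y : Ω → ℝ} (hX : Measurable X) (hY : Measurable Y) (hind : IndepFun X Y P)
    {v w : ℝ≥0} (hXd : P.map X = gaussianReal 0 v) (hYd : P.map Y = gaussianReal 0 w) :
    P.map (X + Y) = gaussianReal 0 (v + w) := by
  by_cases hv : v = 0
  · subst hv
    rw [gaussianReal_zero_var] at hXd
    have hae := map_eq_dirac_ae hX hXd
    have : X + Y =ᵐ[P] Y := by filter_upwards [hae] with ω hω; simp [hω]
    rw [Measure.map_congr this, hYd, zero_add]
  by_cases hw : w = 0
  · subst hw
    rw [gaussianReal_zero_var] at hYd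
    have hae := map_eq_dirac_ae hY hYd
    have : X + Y =ᵐ[P] X := by filter_upwards [hae] with ω hω; simp [hω]
    rw [Measure.map_congr this, hXd, add_zero]
  have hmap : P.map (fun ω => (X ω, Y ω)) = (gaussianReal 0 v).prod (gaussianReal 0 w) := by
    rw [← hXd, ← hYd]
    exact (indepFun_iff_map_prod_eq_prod_map_map hX.aemeasurable hY.aemeasurable).mp hind
  have : P.map (X + Y) = (P.map (fun ω => (X ω, Y ω))).map (fun r : ℝ × ℝ => r.1 + r.2) := by
    rw [Measure.map_map measurable_add (hX.prodMk hY)]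
    rfl
  rw [this, hmap, gauss_conv_measure hv hw]

lemma gauss_sum {Ω : Type*} [MeasurableSpace Ω] {P : Measure Ω} [IsProbabilityMeasure P]
    {n : ℕ} {f : Fin n → Ω → ℝ} (hf : ∀ i, Measurable (f i))
    (hind : iIndepFun f P)
    {v : Fin n → ℝ≥0} (hd : ∀ i, P.map (f i) = gaussianReal 0 (v i)) (s : Finset (Fin n)) :
    P.map (∑ i ∈ s, f i) = gaussianReal 0 (∑ i ∈ s, v i) := by
  classical
  induction s using Finset.cons_induction with
  | empty =>
      simp only [Finset.sum_empty]
      rw [show ((0 : Ω → ℝ)) = fun _ => (0:ℝ) from rfl, Measure.map_const]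
      simp [gaussianReal_zero_var]
  | cons i s hi ih =>
      rw [Finset.sum_cons, Finset.sum_cons]
      have hindep : IndepFun (∑ j ∈ s, f j) (f i) P :=
        hind.indepFun_finsetSum_of_notMem hf hi
      have hindep' : IndepFun (fun a => ∑ j ∈ s, f j a) (f i) P := by
        rwa [Finset.sum_fn] at hindep
      have ih' : P.map (fun a => ∑ j ∈ s, f j a) = gaussianReal 0 (∑ j ∈ s, v j) := by
        rwa [← Finset.sum_fn]
      have hXm : Measurable (fun a => ∑ j ∈ s, f j a) :=
        s.measurable_sum fun j _ => hf j
      have hres := gauss_rv_add hXm (hf i) hindep' ih' (hd i)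
      have : f i + ∑ j ∈ s, f j = (fun a => ∑ j ∈ s, f j a) + f i := by
        rw [Finset.sum_fn]; exact add_comm _ _
      rw [this, hres, add_comm]

lemma std_integrable : Integrable (fun s : ℝ => (Real.sqrt (2 * π))⁻¹ * Real.exp (-s ^ 2 / 2)) := by
  have : (fun s : ℝ => (Real.sqrt (2 * π))⁻¹ * Real.exp (-s ^ 2 / 2))
      = fun s : ℝ => (Real.sqrt (2 * π))⁻¹ * Real.exp (-(1/2 : ℝ) * s ^ 2) := by
    funext s; ring_nf
  rw [this]
  exact (integrable_exp_neg_mul_sq (by norm_num : (0:ℝ) < 1/2)).const_mul _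

lemma gauss_Iio_eq (t : ℝ) :
    gaussianReal 0 1 (Iio t)
      = ENNReal.ofReal (∫ s in Iic t, (Real.sqrt (2 * π))⁻¹ * Real.exp (-s ^ 2 / 2)) := by
  rw [gaussianReal_apply_eq_integral 0 one_ne_zero (Iio t)]
  congr 1
  rw [setIntegral_congr_set Iio_ae_eq_Iic]
  refine setIntegral_congr_fun measurableSet_Iic fun x _ => ?_
  simp only [gaussianPDFReal, sub_zero, NNReal.coe_one, mul_one]

lemma std_strictMono :
    StrictMono (fun t : ℝ => ∫ s in Iic t, (Real.sqrt (2 * π))⁻¹ * Real.exp (-s ^ 2 / 2)) := by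
  intro s t hst
  have hsplit : Iic t = Iic s ∪ Ioc s t := (Set.Iic_union_Ioc_eq_Iic hst.le).symm
  simp only
  rw [hsplit, setIntegral_union (Set.Iic_disjoint_Ioc le_rfl) measurableSet_Ioc
    std_integrable.integrableOn std_integrable.integrableOn]
  have hpos : 0 < ∫ x in Ioc s t, (Real.sqrt (2 * π))⁻¹ * Real.exp (-x ^ 2 / 2) := by
    rw [setIntegral_pos_iff_support_of_nonneg_ae
      (ae_of_all _ fun x => by positivity) std_integrable.integrableOn]
    have hsupp : Function.support
        (fun s : ℝ => (Real.sqrt (2 * π))⁻¹ * Real.exp (-s ^ 2 / 2)) = Set.univ := by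
      ext x; simp only [Function.mem_support, Set.mem_univ, iff_true]
      positivity
    rw [hsupp, Set.univ_inter]
    simpa [Real.volume_Ioc] using sub_pos.mpr hst
  linarith

lemma gauss_general_Iio {v : ℝ≥0} (hv : v ≠ 0) (b c : ℝ) :
    gaussianReal b v (Iio c) = gaussianReal 0 1 (Iio ((c - b) / Real.sqrt v)) := by
  have hvpos : (0:ℝ) < v := lt_of_le_of_ne v.coe_nonneg (by exact_mod_cast (Ne.symm hv))
  set σ := Real.sqrt (v:ℝ) with hσdef
  have hσ : 0 < σ := Real.sqrt_pos.mpr hvpos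
  have hmap : (gaussianReal b v).map (fun x => σ⁻¹ * (x + -b)) = gaussianReal 0 1 := by
    have h1 : (gaussianReal b v).map (· + -b) = gaussianReal 0 v := by
      rw [gaussianReal_map_add_const]; simp
    have h2 : (gaussianReal 0 v).map (σ⁻¹ * ·) = gaussianReal 0 1 := by
      rw [gaussianReal_map_const_mul, mul_zero]
      congr 1
      apply NNReal.coe_injective
      push_cast
      rw [hσdef]
      rw [inv_pow, Real.sq_sqrt v.coe_nonneg]
      field_simp
    have : (fun x : ℝ => σ⁻¹ * (x + -b)) = (fun y => σ⁻¹ * y) ∘ (fun x => x + -b) := rfl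
    rw [this, ← Measure.map_map (measurable_const_mul σ⁻¹) (measurable_add_const (-b)), h1, h2]
  have hpre : (fun x : ℝ => σ⁻¹ * (x + -b)) ⁻¹' (Iio ((c - b) / σ)) = Iio c := by
    ext x
    simp only [Set.mem_preimage, Set.mem_Iio, div_eq_inv_mul]
    rw [mul_lt_mul_iff_right₀ (inv_pos.mpr hσ)]
    constructor <;> intro h <;> linarith
  rw [← hmap, Measure.map_apply ((measurable_add_const (-b)).const_mul σ⁻¹) measurableSet_Iio,
    hpre]

/-- Equivalence of the reliability index approach (RIA) and the performance measure
approach (PMA) for an affine Gaussian limit state: with `Ψ` having independent standard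
normal components and `g ψ = ⟪a, ψ⟫ + b`, the constraint `P[g(Ψ) < 0] ≤ Φ(-β)` holds
if and only if `min {g ψ : ‖ψ‖ = β} ≥ 0`. -/
theorem stmt_3 (n : ℕ)
    (Φ : ℝ → ℝ)
    (hΦ : ∀ t : ℝ, Φ t = ∫ s in Iic t, (Real.sqrt (2 * Real.pi))⁻¹ * Real.exp (-s ^ 2 / 2))
    {Ω : Type*} [MeasurableSpace Ω] (P : Measure Ω) [IsProbabilityMeasure P]
    (Ψ : Ω → EuclideanSpace ℝ (Fin n)) (hΨ : Measurable Ψ)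
    (hindep : iIndepFun (fun i ω => Ψ ω i) P)
    (hgauss : ∀ i : Fin n, P.map (fun ω => Ψ ω i) = gaussianReal 0 1)
    (a : EuclideanSpace ℝ (Fin n)) (ha : a ≠ 0) (b β : ℝ) (hβ : 0 < β)
    (g : EuclideanSpace ℝ (Fin n) → ℝ) (hg : ∀ ψ, g ψ = ⟪a, ψ⟫ + b) :
    P {ω | g (Ψ ω) < 0} ≤ ENNReal.ofReal (Φ (-β)) ↔
      0 ≤ sInf (g '' {ψ | ‖ψ‖ = β}) := by
  classical
  have hna : (0:ℝ) < ‖a‖ := norm_pos_iff.mpr ha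
  have hginner : ∀ ψ : EuclideanSpace ℝ (Fin n), g ψ = (∑ i, a i * ψ i) + b := by
    intro ψ
    rw [hg ψ]
    congr 1
    simp only [PiLp.inner_apply, RCLike.inner_apply, conj_trivial]
    exact Finset.sum_congr rfl fun i _ => by ring
  -- the components
  set f : Fin n → Ω → ℝ := fun i ω => a i * Ψ ω i with hf
  have hΨi : ∀ i, Measurable fun ω => Ψ ω i := fun i => (measurable_pi_apply i).comp ((WithLp.measurable_ofLp 2 _).comp hΨ)
  have hfm : ∀ i, Measurable (f i) := fun i => (hΨi i).const_mul _
  set v : Fin n → ℝ≥0 := fun i => ⟨(a i)^2, sq_nonneg _⟩ with hv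
  have hdi : ∀ i, P.map (f i) = gaussianReal 0 (v i) := by
    intro i
    have : P.map (f i) = (P.map (fun ω => Ψ ω i)).map (fun x => a i * x) := by
      rw [Measure.map_map (measurable_const_mul (a i)) (hΨi i)]
      rfl
    rw [this, hgauss i, gaussianReal_map_const_mul, mul_zero, mul_one]
    rfl
  have hiid : iIndepFun f P :=
    hindep.comp (fun i => (a i * ·)) (fun i => measurable_const_mul _)
  set V : ℝ≥0 := ∑ i, v i with hVdef
  have hsum : P.map (fun ω => ∑ i, f i ω) = gaussianReal 0 V := by
    have := gauss_sum hfm hiid hdi Finset.univ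
    rwa [Finset.sum_fn] at this
  have hVcoe : (V : ℝ) = ‖a‖ ^ 2 := by
    have hnorm : ‖a‖ = Real.sqrt (∑ i, (a i)^2) := by
      rw [EuclideanSpace.norm_eq]
      congr 1
      refine Finset.sum_congr rfl fun i _ => ?_
      rw [Real.norm_eq_abs, sq_abs]
    rw [hnorm, Real.sq_sqrt (Finset.sum_nonneg fun i _ => sq_nonneg _), hVdef,
      NNReal.coe_sum]
    exact Finset.sum_congr rfl fun i _ => rfl
  have hVne : V ≠ 0 := by
    intro h0
    rw [h0] at hVcoe
    simp only [NNReal.coe_zero] at hVcoe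
    exact absurd hVcoe.symm (by positivity)
  have hsqrtV : Real.sqrt V = ‖a‖ := by
    rw [hVcoe, Real.sqrt_sq hna.le]
  -- distribution of g ∘ Ψ
  have hgΨmeas : Measurable fun ω => g (Ψ ω) := by
    simp only [hginner]
    exact ((Finset.univ.measurable_sum fun i _ => hfm i).add_const b)
  have hgmap : P.map (fun ω => g (Ψ ω)) = gaussianReal b V := by
    have heq : (fun ω => g (Ψ ω)) = (fun x => x + b) ∘ (fun ω => ∑ i, f i ω) := by
      funext ω
      simp [hginner, hf]
    rw [heq, ← Measure.map_map (measurable_add_const b)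
      (Finset.univ.measurable_sum fun i _ => hfm i), hsum, gaussianReal_map_add_const, zero_add]
  -- LHS probability
  have hPeq : P {ω | g (Ψ ω) < 0} = ENNReal.ofReal (Φ ((0 - b) / ‖a‖)) := by
    have : {ω | g (Ψ ω) < 0} = (fun ω => g (Ψ ω)) ⁻¹' (Iio 0) := rfl
    rw [this, ← Measure.map_apply hgΨmeas measurableSet_Iio, hgmap,
      gauss_general_Iio hVne, hsqrtV, gauss_Iio_eq, ← hΦ]
  -- sInf
  have hsInf : sInf (g '' {ψ | ‖ψ‖ = β}) = b - ‖a‖ * β := by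
    have hmem : b - ‖a‖ * β ∈ g '' {ψ | ‖ψ‖ = β} := by
      refine ⟨(-(β / ‖a‖)) • a, ?_, ?_⟩
      · simp only [Set.mem_setOf_eq, norm_smul, norm_neg, Real.norm_eq_abs,
          abs_of_nonneg (by positivity : (0:ℝ) ≤ β / ‖a‖)]
        field_simp
      · rw [hg, real_inner_smul_right, real_inner_self_eq_norm_sq]
        field_simp
        ring
    have hlb : ∀ y ∈ g '' {ψ | ‖ψ‖ = β}, b - ‖a‖ * β ≤ y := by
      rintro y ⟨ψ, hψ, rfl⟩
      rw [hg]
      have h1 : -(‖a‖ * ‖ψ‖) ≤ ⟪a, ψ⟫ :=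
        neg_le_of_neg_le (le_trans (neg_le_abs _) (abs_real_inner_le_norm a ψ))
      rw [Set.mem_setOf_eq.mp hψ] at h1
      linarith
    exact le_antisymm (csInf_le ⟨b - ‖a‖ * β, hlb⟩ hmem) (le_csInf ⟨_, hmem⟩ hlb)
  -- strict monotonicity of Φ
  have hΦfun : Φ = fun t : ℝ => ∫ s in Iic t, (Real.sqrt (2 * π))⁻¹ * Real.exp (-s ^ 2 / 2) :=
    funext hΦ
  have hmono : StrictMono Φ := by rw [hΦfun]; exact std_strictMono
  have hΦnonneg : 0 ≤ Φ (-β) := by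
    rw [hΦ]
    exact integral_nonneg fun s => by positivity
  rw [hPeq, hsInf, ENNReal.ofReal_le_ofReal_iff hΦnonneg, hmono.le_iff_le,
    zero_sub, div_le_iff₀ hna, sub_nonneg]
  constructor <;> intro h <;> nlinarith
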